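/- arXiv:2511.12885 — 2 statements merged into one kernel-verified Lean document; each statement's English description precedes it below -/
import Mathlib

section
/- If Ax⋆ = b and x_k - x⋆ lies in the row space of A, then the maximal weighted residual value satisfies max_i |b⁽ⁱ⁾ - A⁽ⁱ⁾x_k|²/‖A⁽ⁱ⁾‖₂² ≥ (σ_r²(A)/‖A‖_F²)‖x_k - x⋆‖₂², where σ_r(A) is the smallest nonzero singular value. -/
open Matrix

/-- Minimum nonzero eigenvalue of a square matrix. -/
noncomputable def lamMinNz {k : ℕ} (M : Matrix (Fin k) (Fin k) ℝ) : ℝ :=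
  sInf {x : ℝ | Module.End.HasEigenvalue M.mulVecLin x ∧ x ≠ 0}

/-- Smallest nonzero singular value of `A`. -/
noncomputable def sigmaR {m n : ℕ} (A : Matrix (Fin m) (Fin n) ℝ) : ℝ :=
  Real.sqrt (lamMinNz (Aᵀ * A))

lemma dot_trans {m n : ℕ} (A : Matrix (Fin m) (Fin n) ℝ) (x : Fin n → ℝ) (u : Fin m → ℝ) :
    ∑ k, x k * (Aᵀ.mulVec u) k = ∑ i, A.mulVec x i * u i := by
  simp only [mulVec, dotProduct, transpose_apply, Finset.mul_sum, Finset.sum_mul]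
  rw [Finset.sum_comm]
  exact Finset.sum_congr rfl fun i _ => Finset.sum_congr rfl fun k _ => by ring

lemma dot_gram {m n : ℕ} (A : Matrix (Fin m) (Fin n) ℝ) (x y : Fin n → ℝ) :
    ∑ k, x k * ((Aᵀ * A).mulVec y) k = ∑ i, A.mulVec x i * A.mulVec y i := by
  rw [← mulVec_mulVec, dot_trans]

lemma eig_nonneg {m n : ℕ} (A : Matrix (Fin m) (Fin n) ℝ) {x : ℝ}
    (hx : Module.End.HasEigenvalue (Aᵀ * A).mulVecLin x) : 0 ≤ x := by
  obtain ⟨w, hw⟩ := hx.exists_hasEigenvector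
  have h1 : (Aᵀ * A).mulVec w = x • w := by
    have := Module.End.mem_eigenspace_iff.mp hw.1
    simpa only [mulVecLin_apply] using this
  have h2 : ∑ k, w k * ((Aᵀ * A).mulVec w) k = ∑ i, A.mulVec w i * A.mulVec w i :=
    dot_gram A w w
  rw [h1] at h2
  have h3 : x * ∑ k, w k ^ 2 = ∑ i, (A.mulVec w i) ^ 2 := by
    rw [Finset.mul_sum]
    rw [show ∑ k, w k * (x • w) k = ∑ k, x * w k ^ 2 from
      Finset.sum_congr rfl fun k _ => by simp [Pi.smul_apply, smul_eq_mul]; ring] at h2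
    rw [h2]
    exact Finset.sum_congr rfl fun i _ => (sq (A.mulVec w i)).symm
  have hw2 : 0 < ∑ k, w k ^ 2 := by
    obtain ⟨k, hk⟩ := Function.ne_iff.mp hw.2
    exact Finset.sum_pos' (fun k _ => sq_nonneg _)
      ⟨k, Finset.mem_univ k, lt_of_le_of_ne (sq_nonneg _) (Ne.symm (pow_ne_zero 2 hk))⟩
  nlinarith [Finset.sum_nonneg (fun i (_ : i ∈ Finset.univ) => sq_nonneg (A.mulVec w i))]

lemma lamMinNz_nonneg {m n : ℕ} (A : Matrix (Fin m) (Fin n) ℝ) : 0 ≤ lamMinNz (Aᵀ * A) :=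
  Real.sInf_nonneg fun _ hx => eig_nonneg A hx.1

lemma key_ineq {m n : ℕ} (A : Matrix (Fin m) (Fin n) ℝ) (e : Fin n → ℝ)
    (he : e ∈ LinearMap.range Aᵀ.mulVecLin) :
    lamMinNz (Aᵀ * A) * (∑ j, (e j) ^ 2) ≤ ∑ i, (A.mulVec e i) ^ 2 := by
  classical
  obtain ⟨u, hu⟩ := he
  rw [mulVecLin_apply] at hu
  have hM : (Aᵀ * A).IsHermitian := by
    rw [← conjTranspose_eq_transpose_of_trivial A]
    exact isHermitian_conjTranspose_mul_self A
  set μ : Fin n → ℝ := hM.eigenvalues with hμ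
  set W : Fin n → Fin n → ℝ := fun i k => hM.eigenvectorBasis i k with hWdef
  set E : EuclideanSpace ℝ (Fin n) := (WithLp.equiv 2 _).symm e with hE
  set c : Fin n → ℝ := fun i => ∑ k, W i k * e k with hc
  have hW : ∀ i, (Aᵀ * A).mulVec (W i) = μ i • W i := fun i => hM.mulVec_eigenvectorBasis i
  have hWne : ∀ i, W i ≠ 0 := by
    intro i h
    apply hM.eigenvectorBasis.orthonormal.ne_zero i
    ext k
    exact congrFun h k
  -- Parseval-type identities from the orthonormal basis
  have hpar : ∑ i, (∑ k, e k * W i k) * (∑ k, W i k * e k) = ∑ k, e k * e k := by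
    have h := hM.eigenvectorBasis.sum_inner_mul_inner E E
    simp only [PiLp.inner_apply, RCLike.inner_apply, starRingEnd_apply, star_trivial] at h
    refine ((Finset.sum_congr rfl fun i _ => ?_).trans h).trans (Finset.sum_congr rfl fun k _ => mul_comm _ _)
    congr 1 <;> exact Finset.sum_congr rfl fun k _ => mul_comm _ _
  have par : ∑ j, (e j) ^ 2 = ∑ i, (c i) ^ 2 := by
    calc ∑ j, (e j) ^ 2 = ∑ k, e k * e k := Finset.sum_congr rfl fun j _ => sq (e j)
      _ = ∑ i, (∑ k, e k * W i k) * (∑ k, W i k * e k) := hpar.symm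
      _ = ∑ i, (c i) ^ 2 := by
          refine Finset.sum_congr rfl fun i _ => ?_
          simp only [hc, sq]
          congr 1
          exact Finset.sum_congr rfl fun k _ => mul_comm _ _
  have vanish : ∀ i, μ i = 0 → c i = 0 := by
    intro i hμi
    have hMv : (Aᵀ * A).mulVec (W i) = 0 := by rw [hW i, hμi, zero_smul]
    have h0 : ∑ l, A.mulVec (W i) l * A.mulVec (W i) l = 0 := by
      rw [← dot_gram, hMv]; simp
    have hAv : A.mulVec (W i) = 0 := by
      funext l
      have h1 : ∀ l' ∈ Finset.univ, (0:ℝ) ≤ A.mulVec (W i) l' * A.mulVec (W i) l' :=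
        fun l' _ => mul_self_nonneg _
      exact mul_self_eq_zero.mp ((Finset.sum_eq_zero_iff_of_nonneg h1).mp h0 l (Finset.mem_univ l))
    simp only [hc]
    rw [← hu, dot_trans, hAv]
    simp
  have lower : ∀ i, μ i ≠ 0 → lamMinNz (Aᵀ * A) ≤ μ i := by
    intro i hμi
    apply csInf_le ⟨0, fun x hx => eig_nonneg A hx.1⟩
    refine ⟨?_, hμi⟩
    apply Module.End.hasEigenvalue_of_hasEigenvector (x := W i)
    exact ⟨Module.End.mem_eigenspace_iff.mpr (by rw [mulVecLin_apply]; exact hW i), hWne i⟩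
  have quad : ∑ i, (A.mulVec e i) ^ 2 = ∑ i, μ i * (c i) ^ 2 := by
    have hq : ∑ i, (∑ k, e k * W i k) * (∑ k, W i k * ((Aᵀ * A).mulVec e) k)
        = ∑ k, e k * ((Aᵀ * A).mulVec e) k := by
      have h := hM.eigenvectorBasis.sum_inner_mul_inner E
        ((WithLp.equiv 2 _).symm ((Aᵀ * A).mulVec e))
      simp only [PiLp.inner_apply, RCLike.inner_apply, starRingEnd_apply, star_trivial] at h
      refine ((Finset.sum_congr rfl fun i _ => ?_).trans h).trans (Finset.sum_congr rfl fun k _ => mul_comm _ _)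
      congr 1 <;> exact Finset.sum_congr rfl fun k _ => mul_comm _ _
    have hterm : ∀ i, ∑ k, W i k * ((Aᵀ * A).mulVec e) k = μ i * c i := by
      intro i
      have hsymm : ∑ k, W i k * ((Aᵀ * A).mulVec e) k = ∑ k, ((Aᵀ * A).mulVec (W i)) k * e k := by
        rw [dot_gram]
        have h2 := dot_gram A e (W i)
        calc ∑ l, A.mulVec (W i) l * A.mulVec e l
            = ∑ l, A.mulVec e l * A.mulVec (W i) l :=
              Finset.sum_congr rfl fun _ _ => mul_comm _ _
          _ = ∑ k, e k * ((Aᵀ * A).mulVec (W i)) k := h2.symm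
          _ = ∑ k, ((Aᵀ * A).mulVec (W i)) k * e k :=
              Finset.sum_congr rfl fun _ _ => mul_comm _ _
      rw [hsymm, hW i]
      simp only [Pi.smul_apply, smul_eq_mul, hc, Finset.mul_sum]
      exact Finset.sum_congr rfl fun k _ => by ring
    calc ∑ i, (A.mulVec e i) ^ 2
        = ∑ i, A.mulVec e i * A.mulVec e i := Finset.sum_congr rfl fun i _ => sq (A.mulVec e i)
      _ = ∑ k, e k * ((Aᵀ * A).mulVec e) k := (dot_gram A e e).symm
      _ = ∑ i, (∑ k, e k * W i k) * (∑ k, W i k * ((Aᵀ * A).mulVec e) k) := hq.symm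
      _ = ∑ i, μ i * (c i) ^ 2 := by
          refine Finset.sum_congr rfl fun i _ => ?_
          rw [hterm i]
          have hce : ∑ k, e k * W i k = c i := by
            simp only [hc]
            exact Finset.sum_congr rfl fun k _ => mul_comm _ _
          rw [hce]; ring
  rw [par, quad, Finset.mul_sum]
  refine Finset.sum_le_sum fun i _ => ?_
  by_cases hci : c i = 0
  · simp [hci]
  · have hμi : μ i ≠ 0 := fun h => hci (vanish i h)
    exact mul_le_mul_of_nonneg_right (lower i hμi) (sq_nonneg _)

theorem stmt_7 {m n : ℕ} (A : Matrix (Fin m) (Fin n) ℝ) (b : Fin m → ℝ)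
    (hA : A ≠ 0) (hrows : ∀ i, A i ≠ 0)
    (xstar xk : Fin n → ℝ) (hsol : A.mulVec xstar = b)
    (hx : xk - xstar ∈ LinearMap.range Aᵀ.mulVecLin) :
    (⨆ i : Fin m, (b i - ∑ j, A i j * xk j)^2 / (∑ j, (A i j)^2)) ≥
      sigmaR A ^ 2 / (∑ i, ∑ j, (A i j)^2) * (∑ j, (xk j - xstar j)^2) := by
  classical
  have hm : Nonempty (Fin m) := by
    rcases Nat.eq_zero_or_pos m with h | h
    · exfalso; apply hA; subst h; ext i j; exact i.elim0
    · exact ⟨⟨0, h⟩⟩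
  set e : Fin n → ℝ := xk - xstar with he
  have heapp : ∀ j, e j = xk j - xstar j := fun j => rfl
  set R : Fin m → ℝ := fun i => ∑ j, (A i j) ^ 2 with hRdef
  have hR : ∀ i, 0 < R i := by
    intro i
    obtain ⟨j, hj⟩ := Function.ne_iff.mp (hrows i)
    exact Finset.sum_pos' (fun j _ => sq_nonneg _)
      ⟨j, Finset.mem_univ j, lt_of_le_of_ne (sq_nonneg _) (Ne.symm (pow_ne_zero 2 hj))⟩
  have hF : 0 < ∑ i, ∑ j, (A i j) ^ 2 :=
    Finset.sum_pos (fun i _ => hR i) Finset.univ_nonempty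
  have hres : ∀ i, b i - ∑ j, A i j * xk j = -(A.mulVec e i) := by
    intro i
    rw [← hsol]
    simp only [he, mulVec, dotProduct, Pi.sub_apply, mul_sub]
    rw [Finset.sum_sub_distrib]
    ring
  set S : ℝ := ⨆ i : Fin m, (A.mulVec e i) ^ 2 / R i with hSdef
  have hLHS : (⨆ i : Fin m, (b i - ∑ j, A i j * xk j)^2 / (∑ j, (A i j)^2)) = S := by
    refine iSup_congr fun i => ?_
    rw [hres i, neg_sq]
  have hS_le : ∀ i, (A.mulVec e i) ^ 2 / R i ≤ S :=
    fun i => le_ciSup (f := fun i : Fin m => (A.mulVec e i) ^ 2 / R i)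
      (Set.Finite.bddAbove (Set.finite_range _)) i
  have hsum : ∑ i, (A.mulVec e i) ^ 2 ≤ S * ∑ i, R i := by
    rw [Finset.mul_sum]
    refine Finset.sum_le_sum fun i _ => ?_
    rw [← div_mul_cancel₀ ((A.mulVec e i) ^ 2) (hR i).ne']
    exact mul_le_mul_of_nonneg_right (hS_le i) (hR i).le
  have hkey := key_ineq A e hx
  have hsig : sigmaR A ^ 2 = lamMinNz (Aᵀ * A) := Real.sq_sqrt (lamMinNz_nonneg A)
  rw [hLHS, ge_iff_le, hsig]
  have hsum2 : (∑ j, (xk j - xstar j)^2) = ∑ j, (e j) ^ 2 :=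
    Finset.sum_congr rfl fun j _ => by rw [heapp]
  rw [hsum2]
  rw [div_mul_eq_mul_div, div_le_iff₀ hF]
  calc lamMinNz (Aᵀ * A) * ∑ j, (e j) ^ 2 ≤ ∑ i, (A.mulVec e i) ^ 2 := hkey
    _ ≤ S * ∑ i, R i := hsum
    _ = S * ∑ i, ∑ j, (A i j) ^ 2 := rfl
end

section
/- Suppose ‖x_k' - x⋆‖₂² ≤ q'·p and ‖x_k - x⋆‖₂² ≤ q·p with q ≤ q' ≤ 1 and p ≥ 0, where q = 1 - σ_r²(A)/t and q' = 1 - (1-ε)²σ_r²(A)/t. Then ‖x_k' - x_k‖₂² ≤ (4 - (4 - 6ε + 3ε²)σ_r²(A)/t)·p. -/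
theorem stmt_12 {n : ℕ} (xk xk' xstar : Fin n → ℝ)
    (ε t σr p : ℝ) (hε0 : 0 < ε) (hε1 : ε < 1) (ht : 0 < t)
    (hst : σr ^ 2 / t ≤ 1) (hp : 0 ≤ p)
    (h1 : (∑ j, (xk' j - xstar j)^2) ≤ (1 - (1 - ε)^2 * σr ^ 2 / t) * p)
    (h2 : (∑ j, (xk j - xstar j)^2) ≤ (1 - σr ^ 2 / t) * p) :
    (∑ j, (xk' j - xk j)^2) ≤ (4 - (4 - 6 * ε + 3 * ε ^ 2) * σr ^ 2 / t) * p := by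
  have key : (∑ j, (xk' j - xk j)^2) ≤
      2 * (∑ j, (xk' j - xstar j)^2) + 2 * (∑ j, (xk j - xstar j)^2) := by
    simp_rw [Finset.mul_sum, ← Finset.sum_add_distrib]
    apply Finset.sum_le_sum
    intro j _
    nlinarith [sq_nonneg (xk' j + xk j - 2 * xstar j)]
  have hs : 0 ≤ σr ^ 2 / t := div_nonneg (sq_nonneg _) ht.le
  rw [mul_div_assoc] at h1
  rw [mul_div_assoc]
  have hd : (0:ℝ) ≤ (2 * ε - ε ^ 2) * (σr ^ 2 / t) * p :=
    mul_nonneg (mul_nonneg (by nlinarith) hs) hp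
  nlinarith [hd]
end
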